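/- Let σ > 0 and ω, c real with ω > 0 and 4ω > c². Set κ = √(4ω − c²), h(x) = cosh(σκx) − c/(2√ω), and α_n = ∫_0^∞ h(x)^{−1/σ−n} dx for n = 0, 1, 2 (all finite). Then α₂ = (4ω/((σ+1)κ²)) α₀ + (2c√ω(2+σ)/((σ+1)κ²)) α₁. -/

import Mathlib

open Real MeasureTheory Set Filter Topology

lemma myh_pos {a : ℝ} (ha : a < 1) (t : ℝ) : 0 < Real.cosh t - a := by
  have := Real.one_le_cosh t; linarith

lemma my_lower {b a : ℝ} (ha : a < 1) (x : ℝ) :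
    (1 - max a 0) / 2 * Real.exp (b * x) ≤ Real.cosh (b * x) - a := by
  have h1 : Real.exp (b * x) / 2 ≤ Real.cosh (b * x) := by
    rw [Real.cosh_eq]; have := (Real.exp_pos (-(b * x))).le; linarith
  have hc := Real.one_le_cosh (b * x)
  have h2 : max a 0 * 1 ≤ max a 0 * Real.cosh (b * x) :=
    mul_le_mul_of_nonneg_left hc (le_max_right a 0)
  have h3 := le_max_left a 0
  have hm : 0 ≤ 1 - max a 0 := by
    have : max a 0 < 1 := max_lt ha one_pos
    linarith
  nlinarith [mul_le_mul_of_nonneg_left h1 hm]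

lemma my_bound {b a q : ℝ} (ha : a < 1) (hq : q ≤ 0) (x : ℝ) :
    (Real.cosh (b * x) - a) ^ q ≤ ((1 - max a 0) / 2) ^ q * Real.exp (q * (b * x)) := by
  have hm : (0:ℝ) < (1 - max a 0) / 2 := by
    have : max a 0 < 1 := max_lt ha one_pos
    linarith
  calc (Real.cosh (b * x) - a) ^ q
      ≤ ((1 - max a 0) / 2 * Real.exp (b * x)) ^ q :=
        Real.rpow_le_rpow_of_nonpos (by positivity) (my_lower ha x) hq
    _ = ((1 - max a 0) / 2) ^ q * Real.exp (q * (b * x)) := by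
        rw [Real.mul_rpow hm.le (Real.exp_pos _).le, ← Real.exp_mul, mul_comm (b*x) q]

lemma my_integrable {b a q : ℝ} (hb : 0 < b) (ha : a < 1) (hq : q < 0) :
    IntegrableOn (fun x => (Real.cosh (b * x) - a) ^ q) (Set.Ioi (0:ℝ)) := by
  have hcont : Continuous fun x => (Real.cosh (b * x) - a) ^ q :=
    Continuous.rpow_const (by continuity) fun x => Or.inl (ne_of_gt (myh_pos ha _))
  have hig : IntegrableOn (fun x => ((1 - max a 0) / 2) ^ q * Real.exp (q * (b * x))) (Ioi (0:ℝ)) := by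
    have h1 : IntegrableOn (fun x => Real.exp (-(-(q * b)) * x)) (Ioi (0:ℝ)) :=
      exp_neg_integrableOn_Ioi 0 (by nlinarith)
    have h2 : IntegrableOn (fun x => Real.exp (q * (b * x))) (Ioi (0:ℝ)) := by
      have e : (fun x : ℝ => Real.exp (-(-(q * b)) * x)) = fun x => Real.exp (q * (b * x)) := by
        funext x; ring_nf
      rwa [e] at h1
    exact h2.const_mul _
  apply hig.mono' hcont.aestronglyMeasurable.restrict
  filter_upwards [] with x
  have hpos := myh_pos ha (b * x)
  rw [Real.norm_eq_abs, abs_of_nonneg (Real.rpow_nonneg hpos.le q)]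
  exact my_bound ha hq.le x

lemma my_rpow_shift {H : ℝ} (hH : 0 < H) (p : ℝ) : H ^ p = H ^ (p - 1) * H := by
  conv_lhs => rw [show p = (p - 1) + 1 by ring]
  rw [Real.rpow_add hH, Real.rpow_one]

lemma my_sinh_le (t : ℝ) : Real.sinh t ≤ Real.exp t := by
  rw [Real.sinh_eq]; have := (Real.exp_pos (-t)).le; have := (Real.exp_pos t).le; linarith

set_option maxHeartbeats 1000000 in
theorem alpha_recursion (σ ω c : ℝ) (hσ : 0 < σ) (hω : 0 < ω) (h : c ^ 2 < 4 * ω) :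
    (∫ x in Set.Ioi (0 : ℝ),
        (Real.cosh (σ * Real.sqrt (4 * ω - c ^ 2) * x) - c / (2 * Real.sqrt ω)) ^ (-(1 / σ) - 2))
      = (4 * ω / ((σ + 1) * (Real.sqrt (4 * ω - c ^ 2)) ^ 2)) *
          (∫ x in Set.Ioi (0 : ℝ),
            (Real.cosh (σ * Real.sqrt (4 * ω - c ^ 2) * x) - c / (2 * Real.sqrt ω)) ^ (-(1 / σ)))
        + (2 * c * Real.sqrt ω * (2 + σ) / ((σ + 1) * (Real.sqrt (4 * ω - c ^ 2)) ^ 2)) *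
          (∫ x in Set.Ioi (0 : ℝ),
            (Real.cosh (σ * Real.sqrt (4 * ω - c ^ 2) * x) - c / (2 * Real.sqrt ω)) ^ (-(1 / σ) - 1)) := by
  set k := Real.sqrt (4 * ω - c ^ 2) with hkdef
  have hk2 : k ^ 2 = 4 * ω - c ^ 2 := Real.sq_sqrt (by nlinarith)
  have hkpos : 0 < k := Real.sqrt_pos.mpr (by nlinarith)
  set s := Real.sqrt ω with hsdef
  have hspos : 0 < s := Real.sqrt_pos.mpr hω
  have hs2 : s ^ 2 = ω := Real.sq_sqrt hω.le
  set a := c / (2 * s) with hadef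
  have ha1 : a < 1 := by
    rw [hadef, div_lt_one (by positivity)]
    nlinarith
  set b := σ * k with hbdef
  have hbpos : 0 < b := by positivity
  have hσ' : (0:ℝ) < 1 / σ := by positivity
  -- integrability
  have i0 : IntegrableOn (fun x => (Real.cosh (b * x) - a) ^ (-(1/σ))) (Ioi (0:ℝ)) :=
    my_integrable hbpos ha1 (by linarith)
  have i1 : IntegrableOn (fun x => (Real.cosh (b * x) - a) ^ (-(1/σ) - 1)) (Ioi (0:ℝ)) :=
    my_integrable hbpos ha1 (by linarith)
  have i2 : IntegrableOn (fun x => (Real.cosh (b * x) - a) ^ (-(1/σ) - 2)) (Ioi (0:ℝ)) :=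
    my_integrable hbpos ha1 (by linarith)
  set c0 := b * (-(1/σ)) with hc0def
  set c1 := b * a * (2 * (-(1/σ)) - 1) with hc1def
  set c2 := b * ((-(1/σ)) - 1) * (a^2 - 1) with hc2def
  set F : ℝ → ℝ := fun x => Real.sinh (b * x) * (Real.cosh (b * x) - a) ^ (-(1/σ) - 1) with hFdef
  -- derivative
  have hderiv : ∀ x : ℝ, HasDerivAt F
      (c0 * (Real.cosh (b * x) - a) ^ (-(1/σ)) + c1 * (Real.cosh (b * x) - a) ^ (-(1/σ) - 1)
        + c2 * (Real.cosh (b * x) - a) ^ (-(1/σ) - 2)) x := by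
    intro x
    have hH : 0 < Real.cosh (b * x) - a := myh_pos ha1 _
    have hlin : HasDerivAt (fun y : ℝ => b * y) b x := by
      simpa using (hasDerivAt_id x).const_mul b
    have hbase : HasDerivAt (fun y => Real.cosh (b * y) - a) (Real.sinh (b * x) * b) x :=
      hlin.cosh.sub_const a
    have hr := hbase.rpow_const (p := -(1/σ) - 1) (Or.inl hH.ne')
    have hF' := hlin.sinh.mul hr
    convert hF' using 1
    · rfl
    · rfl
    · rfl
    have e2 : (Real.cosh (b * x) - a) ^ (-(1/σ) - 1 - 1)
        = (Real.cosh (b * x) - a) ^ (-(1/σ) - 2) := by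
      rw [show -(1/σ) - 1 - 1 = -(1/σ) - 2 by ring]
    have e0 := my_rpow_shift hH (-(1/σ))
    have e1 : (Real.cosh (b * x) - a) ^ (-(1/σ) - 1)
        = (Real.cosh (b * x) - a) ^ (-(1/σ) - 2) * (Real.cosh (b * x) - a) := by
      rw [my_rpow_shift hH (-(1/σ) - 1), e2]
    have hS2 : Real.sinh (b * x) ^ 2 = Real.cosh (b * x) ^ 2 - 1 := Real.sinh_sq _
    rw [e2, e0, e1, hc0def, hc1def, hc2def]
    linear_combination (-(b * ((-(1/σ)) - 1) * ((Real.cosh (b * x) - a) ^ (-(1/σ) - 2)))) * hS2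
  -- continuity of F
  have hFcont : Continuous F := by
    rw [hFdef]
    exact (Real.continuous_sinh.comp (by continuity)).mul
      (Continuous.rpow_const (by continuity) fun x => Or.inl (myh_pos ha1 _).ne')
  -- tendsto F at top
  have hmpos : (0:ℝ) < (1 - max a 0) / 2 := by
    have : max a 0 < 1 := max_lt ha1 one_pos
    linarith
  have htend : Tendsto F atTop (𝓝 0) := by
    have hG : Tendsto (fun x => ((1 - max a 0) / 2) ^ (-(1/σ) - 1)
        * (Real.exp (b * x) * Real.exp ((-(1/σ) - 1) * (b * x)))) atTop (𝓝 0) := by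
      have h1 : Tendsto (fun x : ℝ => (-(1/σ) * b) * x) atTop atBot :=
        Tendsto.const_mul_atTop_of_neg (by nlinarith) tendsto_id
      have h2 : Tendsto (fun x : ℝ => Real.exp ((-(1/σ) * b) * x)) atTop (𝓝 0) :=
        Real.tendsto_exp_atBot.comp h1
      have e : (fun x : ℝ => ((1 - max a 0) / 2) ^ (-(1/σ) - 1)
          * (Real.exp (b * x) * Real.exp ((-(1/σ) - 1) * (b * x))))
          = fun x => ((1 - max a 0) / 2) ^ (-(1/σ) - 1) * Real.exp ((-(1/σ) * b) * x) := by
        funext x; rw [← Real.exp_add]; ring_nf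
      rw [e]
      simpa using h2.const_mul (((1 - max a 0) / 2) ^ (-(1/σ) - 1))
    apply tendsto_of_tendsto_of_tendsto_of_le_of_le' tendsto_const_nhds hG
    · filter_upwards [eventually_ge_atTop (0:ℝ)] with x hx
      exact mul_nonneg (Real.sinh_nonneg_iff.mpr (by positivity)) (Real.rpow_nonneg (myh_pos ha1 _).le _)
    · filter_upwards [eventually_ge_atTop (0:ℝ)] with x hx
      have hb1 := my_bound (b := b) (a := a) ha1 (show -(1/σ) - 1 ≤ 0 by linarith) x
      have hs1 := my_sinh_le (b * x)
      calc F x ≤ Real.exp (b * x) * (((1 - max a 0) / 2) ^ (-(1/σ) - 1) * Real.exp ((-(1/σ) - 1) * (b * x))) := by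
            exact mul_le_mul hs1 hb1 (Real.rpow_nonneg (myh_pos ha1 _).le _) (Real.exp_pos _).le
        _ = ((1 - max a 0) / 2) ^ (-(1/σ) - 1) * (Real.exp (b * x) * Real.exp ((-(1/σ) - 1) * (b * x))) := by ring
  -- FTC
  have i01 : IntegrableOn (fun x => c0 * (Real.cosh (b * x) - a) ^ (-(1/σ))
      + c1 * (Real.cosh (b * x) - a) ^ (-(1/σ) - 1)) (Ioi (0:ℝ)) :=
    (i0.const_mul c0).add (i1.const_mul c1)
  have i012 : IntegrableOn (fun x => c0 * (Real.cosh (b * x) - a) ^ (-(1/σ))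
      + c1 * (Real.cosh (b * x) - a) ^ (-(1/σ) - 1)
      + c2 * (Real.cosh (b * x) - a) ^ (-(1/σ) - 2)) (Ioi (0:ℝ)) :=
    i01.add (i2.const_mul c2)
  have key := integral_Ioi_of_hasDerivAt_of_tendsto (a := (0:ℝ))
    hFcont.continuousWithinAt (fun x _ => hderiv x) i012 htend
  have hF0 : F 0 = 0 := by simp [hFdef]
  rw [hF0, sub_zero,
      MeasureTheory.integral_add i01 (i2.const_mul c2),
      MeasureTheory.integral_add (i0.const_mul c0) (i1.const_mul c1),
      MeasureTheory.integral_const_mul, MeasureTheory.integral_const_mul,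
      MeasureTheory.integral_const_mul] at key
  set I0 := ∫ x in Ioi (0:ℝ), (Real.cosh (b * x) - a) ^ (-(1/σ))
  set I1 := ∫ x in Ioi (0:ℝ), (Real.cosh (b * x) - a) ^ (-(1/σ) - 1)
  set I2 := ∫ x in Ioi (0:ℝ), (Real.cosh (b * x) - a) ^ (-(1/σ) - 2)
  clear_value k s a b c0 c1 c2 F I0 I1 I2
  -- algebra
  have haa : a ^ 2 - 1 = -(k ^ 2) / (4 * ω) := by
    rw [hadef, div_pow, show (2 * s) ^ 2 = 4 * ω by rw [← hs2]; ring, hk2]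
    field_simp
    ring
  have hc2pos : 0 < c2 := by
    rw [hc2def, haa, show b * ((-(1/σ)) - 1) * (-(k ^ 2) / (4 * ω)) = b * ((1/σ) + 1) * (k ^ 2 / (4 * ω)) by ring]
    positivity
  have hσ1 : σ + 1 ≠ 0 := by positivity
  have hA : c2 * (4 * ω / ((σ + 1) * k ^ 2)) = -c0 := by
    rw [hc2def, hc0def, haa, hbdef]
    field_simp
    ring
  have hB : c2 * (2 * c * s * (2 + σ) / ((σ + 1) * k ^ 2)) = -c1 := by
    rw [hc2def, hc1def, haa, hbdef, hadef, ← hs2]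
    field_simp
    ring
  have hgoal : c2 * I2 = c2 * (4 * ω / ((σ + 1) * k ^ 2) * I0
      + 2 * c * s * (2 + σ) / ((σ + 1) * k ^ 2) * I1) := by
    have expand : c2 * (4 * ω / ((σ + 1) * k ^ 2) * I0
        + 2 * c * s * (2 + σ) / ((σ + 1) * k ^ 2) * I1)
        = (c2 * (4 * ω / ((σ + 1) * k ^ 2))) * I0
          + (c2 * (2 * c * s * (2 + σ) / ((σ + 1) * k ^ 2))) * I1 := by ring
    rw [expand, hA, hB]
    linear_combination key
  exact mul_left_cancel₀ hc2pos.ne' hgoal
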